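/- Every p-band in a p-Fatou space is a band: if (X,p,E) satisfies that 0 ≤ x_α ↑ x implies p(x_α) ↑ p(x), and B = M^{⊥p} for nonempty M ⊆ X, then B is a band of the vector lattice X. -/

import Mathlib

/-- Order convergence of a net `x : A → E` to `l` in a lattice-ordered group:
there is a decreasing net `y` (over some directed index) with infimum `0`
such that for each index `b`, eventually `|x a - l| ≤ y b`. -/
def OConv {A E : Type*} [Preorder A] [Lattice E] [AddCommGroup E]
    (x : A → E) (l : E) : Prop :=
  ∃ (K : Type) (s : K → K → Prop) (y : K → E),
    Nonempty K ∧
    (∀ b c : K, ∃ d : K, s b d ∧ s c d) ∧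
    (∀ b c : K, s b c → y c ≤ y b) ∧
    IsGLB (Set.range y) 0 ∧
    (∀ b : K, ∃ a₀ : A, ∀ a : A, a₀ ≤ a → |x a - l| ≤ y b)

/-- `p`-convergence of a net in a lattice-normed vector lattice. -/
def PConv {A X E : Type*} [Preorder A] [Lattice X] [AddCommGroup X]
    [Lattice E] [AddCommGroup E] (p : X → E) (x : A → X) (l : X) : Prop :=
  OConv (fun a => p (x a - l)) 0

section Helpers
variable {F : Type*} [Lattice F] [AddCommGroup F] [CovariantClass F F (· + ·) (· ≤ ·)]

lemma my_disj_add {a b c : F} (hb : 0 ≤ b) (hc : 0 ≤ c)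
    (h1 : a ⊓ c = 0) (h2 : b ⊓ c = 0) (hab : 0 ≤ a + b) : (a + b) ⊓ c = 0 := by
  have h3 : (a + b) ⊓ c ≤ (a + b) ⊓ (c + b) :=
    inf_le_inf_left _ (le_add_of_nonneg_right hb)
  rw [show (a + b) ⊓ (c + b) = (a ⊓ c) + b by
      rw [add_comm a b, add_comm c b, ← add_inf, add_comm (a ⊓ c) b], h1, zero_add] at h3
  have h4 : (a + b) ⊓ c ≤ b ⊓ c := le_inf h3 inf_le_right
  exact le_antisymm (h2 ▸ h4) (le_inf hab hc)

lemma my_lub_inf {ι : Type*} [Nonempty ι] {f : ι → F} {a : F} (c : F)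
    (h : IsLUB (Set.range f) a) :
    IsLUB (Set.range fun i => f i ⊓ c) (a ⊓ c) := by
  constructor
  · rintro _ ⟨i, rfl⟩
    exact inf_le_inf_right c (h.1 ⟨i, rfl⟩)
  · intro w hw
    have key : ∀ i : ι, f i ≤ (a + w) - (a ⊓ c) := by
      intro i
      have h1 : (a - f i) + (f i ⊓ c) = a ⊓ ((a - f i) + c) := by
        rw [add_inf]; congr 1; abel
      have h2 : a ⊓ c ≤ a ⊓ ((a - f i) + c) :=
        inf_le_inf_left a (le_add_of_nonneg_left (sub_nonneg.2 (h.1 ⟨i, rfl⟩)))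
      have h3 : a ⊓ c ≤ (a - f i) + w :=
        le_trans (h1 ▸ h2) (add_le_add_right (hw ⟨i, rfl⟩) _)
      have h4 : f i + (a ⊓ c) ≤ a + w := by
        calc f i + (a ⊓ c) ≤ f i + ((a - f i) + w) := add_le_add_right h3 _
          _ = a + w := by abel
      exact le_sub_iff_add_le.2 h4
    have h5 : a ≤ (a + w) - (a ⊓ c) := h.2 (by rintro _ ⟨i, rfl⟩; exact key i)
    have h6 : a + (a ⊓ c) ≤ a + w := by
      have h7 := add_le_add_left h5 (a ⊓ c)
      calc a + (a ⊓ c) ≤ ((a + w) - (a ⊓ c)) + (a ⊓ c) := h7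
        _ = a + w := by abel
    exact le_of_add_le_add_left h6

end Helpers

variable {X E : Type*}
  [Lattice X] [AddCommGroup X] [Module ℝ X] [CovariantClass X X (· + ·) (· ≤ ·)]
  [Lattice E] [AddCommGroup E] [Module ℝ E] [CovariantClass E E (· + ·) (· ≤ ·)]

theorem p_band_is_band_in_p_Fatou
    (p : X → E)
    (hp_nonneg : ∀ x : X, 0 ≤ p x)
    (hp_eq_zero : ∀ x : X, p x = 0 ↔ x = 0)
    (hp_smul : ∀ (r : ℝ) (x : X), p (r • x) = |r| • p x)
    (hp_add : ∀ x y : X, p (x + y) ≤ p x + p y)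
    (hp_mono : ∀ x y : X, |x| ≤ |y| → p x ≤ p y)
    (h_Fatou : ∀ (A : Type) [Preorder A] [Nonempty A] [IsDirected A (· ≤ ·)]
        (x : A → X) (l : X), (∀ a, 0 ≤ x a) → Monotone x → IsLUB (Set.range x) l →
        IsLUB (Set.range fun a => p (x a)) (p l))
    (M : Set X) (hM : M.Nonempty) :
    (∀ x ∈ {x : X | ∀ m ∈ M, p x ⊓ p m = 0}, ∀ y : X, |y| ≤ |x| →
        y ∈ {x : X | ∀ m ∈ M, p x ⊓ p m = 0}) ∧
    (∀ x ∈ {x : X | ∀ m ∈ M, p x ⊓ p m = 0}, ∀ y ∈ {x : X | ∀ m ∈ M, p x ⊓ p m = 0},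
        x + y ∈ {x : X | ∀ m ∈ M, p x ⊓ p m = 0}) ∧
    (∀ (r : ℝ), ∀ x ∈ {x : X | ∀ m ∈ M, p x ⊓ p m = 0},
        r • x ∈ {x : X | ∀ m ∈ M, p x ⊓ p m = 0}) ∧
    (∀ (A : Type) [Preorder A] [Nonempty A] [IsDirected A (· ≤ ·)] (z : A → X) (l : X),
        (∀ a, z a ∈ {x : X | ∀ m ∈ M, p x ⊓ p m = 0}) → OConv z l →
        l ∈ {x : X | ∀ m ∈ M, p x ⊓ p m = 0}) := by
  refine ⟨?_, ?_, ?_, ?_⟩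
  · -- solid
    intro x hx y hyx m hm
    have h1 : p y ⊓ p m ≤ p x ⊓ p m := inf_le_inf_right _ (hp_mono y x hyx)
    rw [hx m hm] at h1
    exact le_antisymm h1 (le_inf (hp_nonneg y) (hp_nonneg m))
  · -- additive
    intro x hx y hy m hm
    have h1 : p (x + y) ⊓ p m ≤ (p x + p y) ⊓ p m := inf_le_inf_right _ (hp_add x y)
    rw [my_disj_add (hp_nonneg y) (hp_nonneg m) (hx m hm) (hy m hm)
      (add_nonneg (hp_nonneg x) (hp_nonneg y))] at h1
    exact le_antisymm h1 (le_inf (hp_nonneg _) (hp_nonneg m))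
  · -- scalar
    intro r x hx m hm
    have hn : ∀ n : ℕ, p ((n : ℝ) • x) ⊓ p m = 0 := by
      intro n
      induction n with
      | zero =>
        rw [Nat.cast_zero, zero_smul, (hp_eq_zero 0).2 rfl]
        exact inf_eq_left.2 (hp_nonneg m)
      | succ n ih =>
        have hs : ((n + 1 : ℕ) : ℝ) • x = (n : ℝ) • x + x := by
          push_cast; rw [add_smul, one_smul]
        rw [hs]
        have h1 : p ((n : ℝ) • x + x) ⊓ p m ≤ (p ((n : ℝ) • x) + p x) ⊓ p m :=
          inf_le_inf_right _ (hp_add _ _)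
        rw [my_disj_add (hp_nonneg x) (hp_nonneg m) ih (hx m hm)
          (add_nonneg (hp_nonneg _) (hp_nonneg x))] at h1
        exact le_antisymm h1 (le_inf (hp_nonneg _) (hp_nonneg m))
    obtain ⟨n, hn'⟩ := exists_nat_ge |r|
    have hle : p (r • x) ≤ p ((n : ℝ) • x) := by
      rw [hp_smul, hp_smul]
      have h0 : (0 : ℝ) ≤ (n : ℝ) - |r| := sub_nonneg.2 hn'
      have h1 : ((n : ℝ) - |r|) • p x = p (((n : ℝ) - |r|) • x) := by
        rw [hp_smul, abs_of_nonneg h0]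
      have h2 : 0 ≤ ((n : ℝ) - |r|) • p x := h1 ▸ hp_nonneg _
      rw [sub_smul] at h2
      have h3 : |r| • p x ≤ (n : ℝ) • p x := sub_nonneg.1 h2
      rwa [abs_of_nonneg (by positivity : (0:ℝ) ≤ (n:ℝ))]
    have h4 : p (r • x) ⊓ p m ≤ p ((n : ℝ) • x) ⊓ p m := inf_le_inf_right _ hle
    rw [hn n] at h4
    exact le_antisymm h4 (le_inf (hp_nonneg _) (hp_nonneg m))
  · -- order closed
    intro A _pA _nA _dA z l hz hconv m hm
    obtain ⟨K, s, y, hKne, hdir, hdec, hglb, happ⟩ := hconv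
    have hy0 : ∀ b, (0 : X) ≤ y b := fun b => hglb.1 ⟨b, rfl⟩
    letI : Preorder K :=
      { le := fun b c => y c ≤ y b
        le_refl := fun b => le_refl _
        le_trans := fun a b c h1 h2 => le_trans h2 h1 }
    haveI : Nonempty K := hKne
    haveI : IsDirected K (· ≤ ·) :=
      ⟨fun b c => (hdir b c).imp fun d hd => ⟨hdec _ _ hd.1, hdec _ _ hd.2⟩⟩
    set f : K → X := fun b => |l| - |l| ⊓ y b with hf
    have hf0 : ∀ b, 0 ≤ f b := fun b => sub_nonneg.2 inf_le_left
    have hfmono : Monotone f := fun b c h => sub_le_sub_left (inf_le_inf_left _ h) _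
    have hlub : IsLUB (Set.range f) |l| := by
      constructor
      · rintro _ ⟨b, rfl⟩
        exact sub_le_self _ (le_inf (abs_nonneg l) (hy0 b))
      · intro w hw
        have hb : ∀ b, |l| - w ≤ y b := by
          intro b
          have h1 : |l| - (|l| ⊓ y b) ≤ w := hw ⟨b, rfl⟩
          exact le_trans (sub_le_comm.1 h1) inf_le_right
        have h0 : |l| - w ≤ 0 := hglb.2 (by rintro _ ⟨b, rfl⟩; exact hb b)
        exact sub_nonpos.1 h0
    have hFat := h_Fatou K f |l| hf0 hfmono hlub
    have hfB : ∀ b, p (f b) ⊓ p m = 0 := by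
      intro b
      obtain ⟨a₀, ha⟩ := happ b
      have h1 : |z a₀ - l| ≤ y b := ha a₀ le_rfl
      have h2 : f b ≤ |z a₀| := by
        have h3 : f b ≤ |l| - |l| ⊓ |z a₀ - l| :=
          sub_le_sub_left (inf_le_inf_left _ h1) _
        have h5 : |l| - |l| ⊓ |z a₀ - l| = (|l| - |l|) ⊔ (|l| - |z a₀ - l|) :=
          sub_inf _ _ _
        have h6 : |l| - |z a₀ - l| ≤ |z a₀| := by
          have h7 := abs_add_le (z a₀) (l - z a₀)
          rw [show z a₀ + (l - z a₀) = l by abel, abs_sub_comm l (z a₀)] at h7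
          exact sub_le_iff_le_add.2 h7
        calc f b ≤ |l| - |l| ⊓ |z a₀ - l| := h3
          _ = (|l| - |l|) ⊔ (|l| - |z a₀ - l|) := h5
          _ ≤ (0 : X) ⊔ |z a₀| := by
              apply sup_le_sup (le_of_eq (sub_self _)) h6
          _ = |z a₀| := sup_eq_right.2 (abs_nonneg _)
      have h7 : p (f b) ≤ p (z a₀) := hp_mono _ _ (by rwa [abs_of_nonneg (hf0 b)])
      have h8 : p (f b) ⊓ p m ≤ p (z a₀) ⊓ p m := inf_le_inf_right _ h7
      rw [hz a₀ m hm] at h8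
      exact le_antisymm h8 (le_inf (hp_nonneg _) (hp_nonneg m))
    have hlub2 := my_lub_inf (p m) hFat
    obtain ⟨b0⟩ := hKne
    have hzero : p |l| ⊓ p m = 0 := by
      refine le_antisymm (hlub2.2 ?_) ?_
      · rintro _ ⟨b, rfl⟩
        exact le_of_eq (hfB b)
      · calc (0 : E) = p (f b0) ⊓ p m := (hfB b0).symm
          _ ≤ p |l| ⊓ p m := hlub2.1 ⟨b0, rfl⟩
    have hpl : p l = p |l| :=
      le_antisymm (hp_mono l |l| (by rw [abs_abs])) (hp_mono |l| l (by rw [abs_abs]))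
    rw [hpl]
    exact hzero
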